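/- Let 3 ≤ q ≤ 4 and α ∈ (0, α*(q)). Define g(t) = ψ(t)²/t^{q-3}, where ψ(t) = f'(t)² - 2 f(t) f''(t) and f(t) = t² - 1 - α t^q, and let x̂ be the unique positive zero of f', which lies in (x₀(α), x₁(α)). Then g(x₀(α)) < g(x̂) < g(x₁(α)). -/

import Mathlib

open Set Filter MeasureTheory

noncomputable def fQ (q α t : ℝ) : ℝ := t ^ 2 - 1 - α * t ^ q

noncomputable def alphaStar (q : ℝ) : ℝ := 2 / (q - 2) * ((q - 2) / q) ^ (q / 2)

noncomputable def x0 (q α : ℝ) : ℝ := sInf {t : ℝ | 0 < t ∧ fQ q α t = 0}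

noncomputable def x1 (q α : ℝ) : ℝ := sSup {t : ℝ | 0 < t ∧ fQ q α t = 0}

noncomputable def Iq (q α : ℝ) : ℝ := ∫ t in x0 q α..x1 q α, 1 / Real.sqrt (fQ q α t)

noncomputable def fQd1 (q α t : ℝ) : ℝ := 2 * t - α * q * t ^ (q - 1)

noncomputable def fQd2 (q α t : ℝ) : ℝ := 2 - α * q * (q - 1) * t ^ (q - 2)

noncomputable def fQd3 (q α t : ℝ) : ℝ := -(α * q * (q - 1) * (q - 2) * t ^ (q - 3))

noncomputable def psiQ (q α t : ℝ) : ℝ := fQd1 q α t ^ 2 - 2 * fQ q α t * fQd2 q α t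


section Setup
variable {q α : ℝ}

lemma xh_pos (hα0 : 0 < α) (hq : 0 < q) : 0 < (2 / (α * q)) ^ ((1:ℝ) / (q - 2)) :=
  Real.rpow_pos_of_pos (by positivity) _

lemma xh_pow (hα0 : 0 < α) (hq : 2 < q) :
    α * q * ((2 / (α * q)) ^ ((1:ℝ) / (q - 2))) ^ (q-2) = 2 := by
  have hb : (0:ℝ) ≤ 2 / (α * q) := by positivity
  rw [← Real.rpow_mul hb, one_div, inv_mul_cancel₀ (by linarith : q - 2 ≠ 0), Real.rpow_one]
  field_simp

end Setup

section Setup2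
variable {q α : ℝ}

-- u > m : (q-2) * xh^2 > q
lemma xh_sq_gt (hα0 : 0 < α) (hq2 : 2 < q) (hαs : α < alphaStar q) (hq0 : 0 < q) :
    q < (q - 2) * ((2 / (α * q)) ^ ((1:ℝ) / (q - 2)))^(2:ℕ) := by
  have hq2' : q - 2 ≠ 0 := by linarith
  set r : ℝ := (q-2)/q with hr
  have hr0 : 0 < r := div_pos (by linarith) hq0
  have hri0 : 0 < r⁻¹ := inv_pos.2 hr0
  have hs1 : alphaStar q * q = 2 * r ^ (q/2 - 1) := by
    rw [alphaStar, Real.rpow_sub hr0, Real.rpow_one, hr]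
    field_simp
  have hsq : 0 < alphaStar q := by
    rw [alphaStar]
    have h2 : (0:ℝ) < q - 2 := by linarith
    positivity
  have hrp0 : (0:ℝ) < r ^ (q/2-1) := Real.rpow_pos_of_pos hr0 _
  have hs2 : 2 / (alphaStar q * q) = (r⁻¹) ^ ((q-2)/2) := by
    have e1 : (r⁻¹) ^ ((q-2)/2) = (r ^ (q/2-1))⁻¹ := by
      rw [Real.inv_rpow hr0.le, ← Real.rpow_neg hr0.le, ← Real.rpow_neg hr0.le]
      ring_nf
    rw [hs1, e1]
    field_simp
  have hbase : (r⁻¹) ^ ((q-2)/2) < 2 / (α * q) := by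
    rw [← hs2]
    exact div_lt_div_of_pos_left (by norm_num) (by positivity)
      (mul_lt_mul_of_pos_right hαs hq0)
  have hexp : (q-2)/2 * (1/(q-2)) = (1:ℝ)/2 := by
    field_simp
  have hxh : (r⁻¹) ^ ((1:ℝ)/2) < (2 / (α * q)) ^ ((1:ℝ) / (q - 2)) := by
    have h1 : ((r⁻¹) ^ ((q-2)/2)) ^ ((1:ℝ)/(q-2)) < (2 / (α * q)) ^ ((1:ℝ) / (q - 2)) :=
      Real.rpow_lt_rpow (Real.rpow_pos_of_pos hri0 _).le hbase (one_div_pos.2 (by linarith))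
    rwa [← Real.rpow_mul hri0.le, hexp] at h1
  have hx0 : (0:ℝ) < (r⁻¹) ^ ((1:ℝ)/2) := Real.rpow_pos_of_pos hri0 _
  have hsq2 : ((r⁻¹) ^ ((1:ℝ)/2))^(2:ℕ) = r⁻¹ := by
    rw [← Real.rpow_natCast ((r⁻¹) ^ ((1:ℝ)/2)), ← Real.rpow_mul hri0.le]
    norm_num
  have h2 : r⁻¹ < ((2 / (α * q)) ^ ((1:ℝ) / (q - 2)))^(2:ℕ) := by
    rw [← hsq2]
    exact pow_lt_pow_left₀ hxh hx0.le (by norm_num)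
  have hrinv : r⁻¹ = q / (q-2) := by rw [hr]; field_simp
  rw [hrinv] at h2
  have := (div_lt_iff₀ (by linarith : (0:ℝ) < q - 2)).1 h2
  linarith [mul_comm q (((2 / (α * q)) ^ ((1:ℝ) / (q - 2)))^(2:ℕ))]
end Setup2

section Setup3
variable {q α : ℝ}

lemma fQ_hasDerivAt (hq : 1 ≤ q) (t : ℝ) :
    HasDerivAt (fQ q α) (fQd1 q α t) t := by
  have h1 : HasDerivAt (fun t : ℝ => t ^ q) (q * t^(q-1)) t :=
    Real.hasDerivAt_rpow_const (Or.inr hq)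
  have h2 : HasDerivAt (fun t : ℝ => t ^ (2:ℕ)) (2 * t) t := by
    simpa using (hasDerivAt_pow 2 t)
  have := (h2.sub_const 1).sub (h1.const_mul α)
  rw [show fQd1 q α t = 2*t - α*(q*t^(q-1)) from by unfold fQd1; ring]
  exact this

lemma fQd1_factor (hα0 : 0 < α) {t : ℝ} (ht : 0 < t) :
    fQd1 q α t = t * (2 - α * q * t ^ (q-2)) := by
  unfold fQd1
  have h := Real.rpow_add ht (q-2) 1
  rw [Real.rpow_one] at h
  rw [show q-1 = q-2+1 by ring, h]; ring

-- strict monotonicity on [0, xh]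
lemma fQ_strictMonoOn (hα0 : 0 < α) (hq2 : 2 < q) (hq3 : 3 ≤ q) :
    StrictMonoOn (fQ q α) (Icc 0 ((2 / (α * q)) ^ ((1:ℝ) / (q - 2)))) := by
  set xh := (2 / (α * q)) ^ ((1:ℝ) / (q - 2)) with hxh
  apply strictMonoOn_of_deriv_pos (convex_Icc _ _)
  · exact fun t _ => ((fQ_hasDerivAt (by linarith) t).continuousAt).continuousWithinAt
  · intro t ht
    rw [interior_Icc] at ht
    rw [(fQ_hasDerivAt (by linarith) t).deriv, fQd1_factor hα0 ht.1]
    have hpow : t ^ (q-2) < xh ^ (q-2) :=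
      Real.rpow_lt_rpow ht.1.le ht.2 (by linarith)
    have hkey := xh_pow hα0 hq2
    rw [← hxh] at hkey
    have hαq : 0 < α * q := by positivity
    nlinarith [mul_lt_mul_of_pos_left hpow hαq, ht.1]

end Setup3

section Setup4
variable {q α : ℝ}

lemma fQ_strictAntiOn (hα0 : 0 < α) (hq2 : 2 < q) (hq3 : 3 ≤ q) :
    StrictAntiOn (fQ q α) (Ici ((2 / (α * q)) ^ ((1:ℝ) / (q - 2)))) := by
  set xh := (2 / (α * q)) ^ ((1:ℝ) / (q - 2)) with hxh
  have hxh0 : 0 < xh := xh_pos hα0 (by linarith)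
  apply strictAntiOn_of_deriv_neg (convex_Ici _)
  · exact fun t _ => ((fQ_hasDerivAt (by linarith) t).continuousAt).continuousWithinAt
  · intro t ht
    rw [interior_Ici] at ht
    have ht0 : 0 < t := lt_trans hxh0 ht
    rw [(fQ_hasDerivAt (by linarith) t).deriv, fQd1_factor hα0 ht0]
    have hpow : xh ^ (q-2) < t ^ (q-2) :=
      Real.rpow_lt_rpow hxh0.le ht (by linarith)
    have hkey := xh_pow hα0 hq2
    rw [← hxh] at hkey
    have hαq : 0 < α * q := by positivity
    have : 2 < α * q * t ^ (q-2) := by nlinarith [mul_lt_mul_of_pos_left hpow hαq]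
    nlinarith

-- value at xh
lemma fQ_xh (hα0 : 0 < α) (hq2 : 2 < q) :
    fQ q α ((2 / (α * q)) ^ ((1:ℝ) / (q - 2)))
      = ((q-2) * ((2 / (α * q)) ^ ((1:ℝ) / (q - 2)))^(2:ℕ) - q) / q := by
  set xh := (2 / (α * q)) ^ ((1:ℝ) / (q - 2)) with hxh
  have hxh0 : 0 < xh := xh_pos hα0 (by linarith)
  have hkey := xh_pow hα0 hq2
  rw [← hxh] at hkey
  have hsplit : xh ^ q = xh ^ (q-2) * xh^(2:ℕ) := by
    rw [← Real.rpow_natCast xh 2, ← Real.rpow_add hxh0]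
    norm_num
  have hq0 : (0:ℝ) < q := by linarith
  unfold fQ
  rw [hsplit]
  have h2 : α * xh ^ (q-2) = 2 / q := by
    rw [eq_div_iff hq0.ne']; linarith [hkey]
  field_simp
  nlinarith [h2, sq_nonneg (xh^(2:ℕ))]

end Setup4

section Setup5
variable {q α : ℝ}

lemma one_lt_xh (hα0 : 0 < α) (hq2 : 2 < q) (hαs : α < alphaStar q) :
    1 < (2 / (α * q)) ^ ((1:ℝ) / (q - 2)) := by
  set xh := (2 / (α * q)) ^ ((1:ℝ) / (q - 2)) with hxh
  have hxh0 : 0 < xh := xh_pos hα0 (by linarith)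
  have h := xh_sq_gt hα0 hq2 hαs (by linarith)
  rw [← hxh] at h
  by_contra hc
  push_neg at hc
  have hx2 : xh^(2:ℕ) ≤ 1 := by nlinarith
  nlinarith

lemma fQ_xh_pos (hα0 : 0 < α) (hq2 : 2 < q) (hαs : α < alphaStar q) :
    0 < fQ q α ((2 / (α * q)) ^ ((1:ℝ) / (q - 2))) := by
  rw [fQ_xh hα0 hq2]
  have h := xh_sq_gt hα0 hq2 hαs (by linarith)
  have hq0 : (0:ℝ) < q := by linarith
  apply div_pos _ hq0
  linarith

lemma fQ_one (q : ℝ) (α : ℝ) : fQ q α 1 = -α := by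
  unfold fQ; rw [Real.one_rpow]; ring

-- existence of roots
lemma exists_roots (hα0 : 0 < α) (hq2 : 2 < q) (hq3 : 3 ≤ q) (hαs : α < alphaStar q) :
    ∃ a b : ℝ, (1 < a) ∧ (a < (2 / (α * q)) ^ ((1:ℝ) / (q - 2)))
      ∧ ((2 / (α * q)) ^ ((1:ℝ) / (q - 2)) < b)
      ∧ fQ q α a = 0 ∧ fQ q α b = 0 := by
  set xh := (2 / (α * q)) ^ ((1:ℝ) / (q - 2)) with hxh
  have hxh0 : 0 < xh := xh_pos hα0 (by linarith)
  have h1xh : 1 < xh := one_lt_xh hα0 hq2 hαs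
  have hcont : ∀ s : Set ℝ, ContinuousOn (fQ q α) s :=
    fun s => fun t _ => ((fQ_hasDerivAt (by linarith) t).continuousAt).continuousWithinAt
  have hfxh : 0 < fQ q α xh := fQ_xh_pos hα0 hq2 hαs
  -- left root
  have hIoo1 : (0:ℝ) ∈ Ioo (fQ q α 1) (fQ q α xh) := by
    rw [fQ_one]; exact ⟨by linarith, hfxh⟩
  obtain ⟨a, ha, hfa⟩ := intermediate_value_Ioo h1xh.le (hcont (Icc 1 xh)) hIoo1
  -- right root : T = (2/α)^(1/(q-2))
  set T := (2 / α) ^ ((1:ℝ) / (q - 2)) with hT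
  have hT0 : 0 < T := Real.rpow_pos_of_pos (by positivity) _
  have hTpow : T ^ (q-2) = 2 / α := by
    rw [hT, ← Real.rpow_mul (by positivity), one_div,
      inv_mul_cancel₀ (by linarith : q - 2 ≠ 0), Real.rpow_one]
  have hxhT : xh < T := by
    rw [hxh, hT]
    apply Real.rpow_lt_rpow (by positivity) _ (one_div_pos.2 (by linarith))
    rw [div_lt_div_iff₀ (by positivity) hα0]
    nlinarith
  have hfT : fQ q α T < 0 := by
    unfold fQ
    have hsplit : T ^ q = T ^ (q-2) * T^(2:ℕ) := by
      rw [← Real.rpow_natCast T 2, ← Real.rpow_add hT0]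
      norm_num
    rw [hsplit, hTpow]
    have : α * (2/α * T^(2:ℕ)) = 2 * T^(2:ℕ) := by field_simp
    rw [this]
    nlinarith [sq_nonneg T, pow_pos hT0 2]
  have hIoo2 : (0:ℝ) ∈ Ioo (fQ q α T) (fQ q α xh) := ⟨hfT, hfxh⟩
  obtain ⟨b, hb, hfb⟩ := intermediate_value_Ioo' hxhT.le (hcont (Icc xh T)) hIoo2
  exact ⟨a, b, ha.1, ha.2, hb.1, hfa, hfb⟩

end Setup5

section Setup6
variable {q α : ℝ}

lemma root_set_eq (hα0 : 0 < α) (hq2 : 2 < q) (hq3 : 3 ≤ q) (hαs : α < alphaStar q)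
    {a b : ℝ} (ha1 : 1 < a) (hax : a < (2 / (α * q)) ^ ((1:ℝ) / (q - 2)))
    (hxb : (2 / (α * q)) ^ ((1:ℝ) / (q - 2)) < b)
    (hfa : fQ q α a = 0) (hfb : fQ q α b = 0) :
    {t : ℝ | 0 < t ∧ fQ q α t = 0} = {a, b} := by
  set xh := (2 / (α * q)) ^ ((1:ℝ) / (q - 2)) with hxh
  have hxh0 : 0 < xh := xh_pos hα0 (by linarith)
  have hmono := fQ_strictMonoOn hα0 hq2 hq3
  have hanti := fQ_strictAntiOn hα0 hq2 hq3
  rw [← hxh] at hmono hanti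
  have hfxh : 0 < fQ q α xh := by
    have := fQ_xh_pos hα0 hq2 hαs; rwa [← hxh] at this
  ext t
  simp only [mem_setOf_eq, mem_insert_iff, mem_singleton_iff]
  constructor
  · rintro ⟨ht0, hft⟩
    rcases lt_trichotomy t xh with h | h | h
    · left
      exact hmono.injOn ⟨ht0.le, h.le⟩ ⟨by linarith, hax.le⟩ (by rw [hft, hfa])
    · exfalso; rw [h] at hft; exact hfxh.ne' hft
    · right
      exact hanti.injOn (mem_Ici.2 h.le) (mem_Ici.2 hxb.le) (by rw [hft, hfb])
  · rintro (rfl | rfl)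
    · exact ⟨by linarith, hfa⟩
    · exact ⟨by linarith [hxh0], hfb⟩

end Setup6

section Setup7
variable {q α : ℝ}

lemma psiQ_xh (hα0 : 0 < α) (hq2 : 2 < q) :
    psiQ q α ((2 / (α * q)) ^ ((1:ℝ) / (q - 2)))
      = 4 * (q - 2) * fQ q α ((2 / (α * q)) ^ ((1:ℝ) / (q - 2))) := by
  set xh := (2 / (α * q)) ^ ((1:ℝ) / (q - 2)) with hxh
  have hxh0 : 0 < xh := xh_pos hα0 (by linarith)
  have hkey := xh_pow hα0 hq2
  rw [← hxh] at hkey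
  have h1 : fQd1 q α xh = 0 := by
    rw [fQd1_factor hα0 hxh0]
    have : α * q * xh ^ (q-2) = 2 := hkey
    rw [this]; ring
  have h2 : fQd2 q α xh = 2 - 2*(q-1) := by
    unfold fQd2
    rw [show α * q * (q-1) * xh ^ (q-2) = (q-1) * (α * q * xh ^ (q-2)) by ring, hkey]
    ring
  unfold psiQ
  rw [h1, h2]; ring

-- value of psiQ at a root
lemma psiQ_root (hα0 : 0 < α) {r : ℝ} (hr : 0 < r) (hfr : fQ q α r = 0) :
    psiQ q α r = 4 * r^(2:ℕ) * (1 - α*q*r^(q-2)/2)^2 := by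
  unfold psiQ
  rw [hfr, fQd1_factor hα0 hr]
  ring

end Setup7


noncomputable def Rfun (p x : ℝ) : ℝ :=
  2*(p-1)^2 - 2*p*(p-1)*x + 2*(p-1)*x^p - p*x^((3:ℝ)/4)
    + 2*p*x^(p-(1:ℝ)/4) - p*x^(2*p-(5:ℝ)/4)

lemma Rfun_hasDerivAt (p : ℝ) {x : ℝ} (hx : 0 < x) :
    HasDerivAt (Rfun p)
      (-(2*p*(p-1)) + 2*(p-1)*(p*x^(p-1)) - p*((3:ℝ)/4*x^((3:ℝ)/4-1))
        + 2*p*((p-(1:ℝ)/4)*x^(p-(1:ℝ)/4-1)) - p*((2*p-(5:ℝ)/4)*x^(2*p-(5:ℝ)/4-1))) x := by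
  have h1 : HasDerivAt (fun x : ℝ => x^p) (p*x^(p-1)) x :=
    Real.hasDerivAt_rpow_const (Or.inl hx.ne')
  have h2 : HasDerivAt (fun x : ℝ => x^((3:ℝ)/4)) ((3:ℝ)/4*x^((3:ℝ)/4-1)) x :=
    Real.hasDerivAt_rpow_const (Or.inl hx.ne')
  have h3 : HasDerivAt (fun x : ℝ => x^(p-(1:ℝ)/4)) ((p-(1:ℝ)/4)*x^(p-(1:ℝ)/4-1)) x :=
    Real.hasDerivAt_rpow_const (Or.inl hx.ne')
  have h4 : HasDerivAt (fun x : ℝ => x^(2*p-(5:ℝ)/4)) ((2*p-(5:ℝ)/4)*x^(2*p-(5:ℝ)/4-1)) x :=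
    Real.hasDerivAt_rpow_const (Or.inl hx.ne')
  have hid : HasDerivAt (fun x : ℝ => x) 1 x := hasDerivAt_id x
  have := (((((hasDerivAt_const x (2*(p-1)^2)).sub ((hid.const_mul (2*p*(p-1))))).add
      (h1.const_mul (2*(p-1)))).sub (h2.const_mul p)).add
      (h3.const_mul (2*p))).sub (h4.const_mul p)
  exact this.congr_deriv (by ring)

lemma Rfun_deriv_neg (p : ℝ) (hp : (3:ℝ)/2 ≤ p) {x : ℝ} (hx : 0 < x) (hx1 : x ≠ 1) :
    deriv (Rfun p) x < 0 := by
  rw [(Rfun_hasDerivAt p hx).deriv]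
  have hxq : (0:ℝ) < x ^ (-(1:ℝ)/4) := Real.rpow_pos_of_pos hx _
  set X := x ^ (-(1:ℝ)/4) with hX
  set y := x ^ (p-1) with hy
  have hyX : x ^ (p-(1:ℝ)/4-1) = y * X := by
    rw [hy, hX, ← Real.rpow_add hx]; ring_nf
  have hyyX : x ^ (2*p-(5:ℝ)/4-1) = y * y * X := by
    rw [hy, hX, ← Real.rpow_add hx, ← Real.rpow_add hx]; ring_nf
  have hX34 : x ^ ((3:ℝ)/4-1) = X := by rw [hX]; norm_num
  have hz : x ^ (p-(5:ℝ)/4) = y * X := by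
    rw [hy, hX, ← Real.rpow_add hx]; ring_nf
  have hfact : -(2*p*(p-1)) + 2*(p-1)*(p*x^(p-1)) - p*((3:ℝ)/4*x^((3:ℝ)/4-1))
        + 2*p*((p-(1:ℝ)/4)*x^(p-(1:ℝ)/4-1)) - p*((2*p-(5:ℝ)/4)*x^(2*p-(5:ℝ)/4-1))
      = p * (1-y) * (-(2*(p-1))*(1 - y*X) - (3:ℝ)/4*X*(1-y)) := by
    rw [hyX, hyyX, hX34]; ring
  rw [hfact]
  have hp0 : (0:ℝ) < p := by linarith
  rcases lt_or_gt_of_ne hx1 with h1 | h1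
  · have hy1 : y < 1 := Real.rpow_lt_one hx.le h1 (by linarith)
    have hz1 : y * X < 1 := by
      rw [← hz]; exact Real.rpow_lt_one hx.le h1 (by linarith)
    have hbr : (-(2*(p-1))*(1 - y*X) - (3:ℝ)/4*X*(1-y)) < 0 := by nlinarith
    have hpy : 0 < p * (1-y) := by nlinarith
    exact mul_neg_of_pos_of_neg hpy hbr
  · have hy1 : 1 < y := Real.one_lt_rpow_iff_of_pos hx |>.2 (Or.inl ⟨h1, by linarith⟩)
    have hz1 : 1 < y * X := by
      rw [← hz]; exact Real.one_lt_rpow_iff_of_pos hx |>.2 (Or.inl ⟨h1, by linarith⟩)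
    have hbr : 0 < (-(2*(p-1))*(1 - y*X) - (3:ℝ)/4*X*(1-y)) := by nlinarith
    have hpy : p * (1-y) < 0 := by nlinarith
    exact mul_neg_of_neg_of_pos hpy hbr

lemma Rfun_one (p : ℝ) : Rfun p 1 = 0 := by
  simp [Rfun, Real.one_rpow]; ring

lemma Rfun_contOn (p : ℝ) {s : Set ℝ} (hs : s ⊆ Ioi 0) : ContinuousOn (Rfun p) s :=
  fun t ht => ((Rfun_hasDerivAt p (hs ht)).continuousAt).continuousWithinAt

lemma Rfun_pos (p : ℝ) (hp : (3:ℝ)/2 ≤ p) {x : ℝ} (hx : 0 < x) (hx1 : x < 1) :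
    0 < Rfun p x := by
  have hanti : StrictAntiOn (Rfun p) (Icc x 1) := by
    apply strictAntiOn_of_deriv_neg (convex_Icc x 1)
      (Rfun_contOn p (fun t ht => lt_of_lt_of_le hx ht.1))
    intro t ht
    rw [interior_Icc] at ht
    exact Rfun_deriv_neg p hp (hx.trans ht.1) (ne_of_lt ht.2)
  have := hanti ⟨le_refl x, hx1.le⟩ ⟨hx1.le, le_refl 1⟩ hx1
  rwa [Rfun_one] at this

lemma Rfun_neg (p : ℝ) (hp : (3:ℝ)/2 ≤ p) {x : ℝ} (hx1 : 1 < x) :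
    Rfun p x < 0 := by
  have hanti : StrictAntiOn (Rfun p) (Icc 1 x) := by
    apply strictAntiOn_of_deriv_neg (convex_Icc 1 x)
      (Rfun_contOn p (fun t ht => lt_of_lt_of_le one_pos ht.1))
    intro t ht
    rw [interior_Icc] at ht
    exact Rfun_deriv_neg p hp (lt_trans one_pos ht.1) (ne_of_gt ht.1)
  have := hanti ⟨le_refl 1, hx1.le⟩ ⟨hx1.le, le_refl x⟩ hx1
  rwa [Rfun_one] at this

lemma Rfun_eq (p : ℝ) {x : ℝ} (hx : 0 < x) :
    Rfun p x = 2*(p-1)*(p-1-p*x+x*x^(p-1)) - p*(1-x^(p-1))^2*x^((3:ℝ)/4) := by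
  have h1 : x ^ p = x * x^(p-1) := by
    nth_rewrite 1 [show p = 1 + (p-1) by ring]
    rw [Real.rpow_add hx, Real.rpow_one]
  have h2 : x ^ (p-(1:ℝ)/4) = x^(p-1) * x^((3:ℝ)/4) := by
    rw [← Real.rpow_add hx]; ring_nf
  have h3 : x ^ (2*p-(5:ℝ)/4) = x^(p-1) * x^(p-1) * x^((3:ℝ)/4) := by
    rw [← Real.rpow_add hx, ← Real.rpow_add hx]; ring_nf
  unfold Rfun
  rw [h1, h2, h3]; ring

lemma coreA (p x : ℝ) (hp : (3:ℝ)/2 ≤ p) (hx0 : 0 < x) (hx1 : x < 1) :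
    p*(1-x^(p-1))^2*x^((3:ℝ)/4) < 2*(p-1)*(p-1-p*x+x*x^(p-1)) := by
  have := Rfun_pos p hp hx0 hx1
  rw [Rfun_eq p hx0] at this; linarith

lemma coreB (p x : ℝ) (hp : (3:ℝ)/2 ≤ p) (hx1 : 1 < x) :
    2*(p-1)*(p-1-p*x+x*x^(p-1)) < p*(1-x^(p-1))^2*x^((3:ℝ)/4) := by
  have := Rfun_neg p hp hx1
  rw [Rfun_eq p (lt_trans one_pos hx1)] at this; linarith

lemma final_step (q A B ta tb : ℝ) (hq3 : 3 ≤ q) (hq4 : q ≤ 4)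
    (h0a : 0 < ta) (hab : ta ≤ tb) (hA : 0 ≤ A)
    (key : A * (tb/ta)^((1:ℝ)/2) < B) :
    A^2 / ta^(q-3) < B^2 / tb^(q-3) := by
  have h0b : 0 < tb := lt_of_lt_of_le h0a hab
  have hW : 1 ≤ tb / ta := (one_le_div h0a).2 hab
  have hWpos : (0:ℝ) < tb / ta := by positivity
  have hexp : (tb/ta)^((q-3)/2) ≤ (tb/ta)^((1:ℝ)/2) :=
    Real.rpow_le_rpow_of_exponent_le hW (by linarith)
  have hkey2 : A * (tb/ta)^((q-3)/2) < B := by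
    calc A * (tb/ta)^((q-3)/2) ≤ A * (tb/ta)^((1:ℝ)/2) := by
          exact mul_le_mul_of_nonneg_left hexp hA
      _ < B := key
  have hL0 : 0 ≤ A * (tb/ta)^((q-3)/2) := by positivity
  have hB0 : 0 < B := lt_of_le_of_lt hL0 hkey2
  have hsq : (A * (tb/ta)^((q-3)/2))^2 < B^2 := by nlinarith
  have hpow : ((tb/ta)^((q-3)/2))^2 = (tb/ta)^(q-3) := by
    rw [← Real.rpow_natCast ((tb/ta)^((q-3)/2)) 2, ← Real.rpow_mul hWpos.le]
    norm_num
  have hdiv : (tb/ta)^(q-3) = tb^(q-3) / ta^(q-3) :=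
    Real.div_rpow h0b.le h0a.le _
  have hta : (0:ℝ) < ta^(q-3) := Real.rpow_pos_of_pos h0a _
  have htb : (0:ℝ) < tb^(q-3) := Real.rpow_pos_of_pos h0b _
  rw [div_lt_div_iff₀ hta htb]
  have : A^2 * ((tb/ta)^(q-3)) < B^2 := by
    rw [← hpow]; nlinarith [hsq]
  rw [hdiv] at this
  calc A^2 * tb^(q-3) = (A^2 * (tb^(q-3)/ta^(q-3))) * ta^(q-3) := by
        field_simp
    _ < B^2 * ta^(q-3) := by exact mul_lt_mul_of_pos_right this hta

section Key
variable {q α : ℝ}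

lemma keyA (hα0 : 0 < α) (hq3 : 3 ≤ q) (hq4 : q ≤ 4) (hαs : α < alphaStar q)
    {a : ℝ} (ha1 : 1 < a) (hax : a < (2 / (α * q)) ^ ((1:ℝ) / (q - 2)))
    (hfa : fQ q α a = 0) :
    psiQ q α a * (((2 / (α * q)) ^ ((1:ℝ) / (q - 2)))/a)^((1:ℝ)/2)
      < psiQ q α ((2 / (α * q)) ^ ((1:ℝ) / (q - 2))) := by
  have hq2 : 2 < q := by linarith
  set xh := (2 / (α * q)) ^ ((1:ℝ) / (q - 2)) with hxh
  have hxh0 : 0 < xh := xh_pos hα0 (by linarith)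
  have ha0 : 0 < a := by linarith
  have hkey := xh_pow hα0 hq2
  rw [← hxh] at hkey
  set p := q/2 with hp
  have hp32 : (3:ℝ)/2 ≤ p := by rw [hp]; linarith
  have hp0 : 0 < p := by linarith
  set s := a^(2:ℕ) with hs
  set u := xh^(2:ℕ) with hu
  have hs0 : 0 < s := by positivity
  have hu0 : 0 < u := by positivity
  set y := α*q*a^(q-2)/2 with hy
  set X := s/u with hX
  have hX0 : 0 < X := by positivity
  have hX1 : X < 1 := by
    rw [hX, div_lt_one hu0, hs, hu]
    exact pow_lt_pow_left₀ hax ha0.le (by norm_num)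
  -- X^(p-1) = y
  have hXy : X ^ (p - 1) = y := by
    have e1 : X = (a/xh)^((2:ℕ):ℝ) := by
      rw [Real.rpow_natCast, hX, hs, hu, div_pow]
    have e2 : X ^ (p-1) = (a/xh) ^ (q-2) := by
      rw [e1, ← Real.rpow_mul (by positivity)]
      norm_num [hp]
      ring_nf
    rw [e2, Real.div_rpow ha0.le hxh0.le, hy]
    have hxhq : xh ^ (q-2) = 2/(α*q) := by
      rw [eq_div_iff (by positivity : α*q ≠ 0)]; linarith
    rw [hxhq]
    field_simp
  -- root identity : s*y = p*(s-1)
  have haq : a^q = a^(q-2) * s := by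
    rw [hs, ← Real.rpow_natCast a 2, ← Real.rpow_add ha0]
    norm_num
  have hroot : α * a^q = s - 1 := by
    have := hfa; unfold fQ at this
    rw [← hs] at this; linarith
  have hsy : s * y = p * (s - 1) := by
    rw [hy, hp]
    rw [haq] at hroot
    field_simp
    nlinarith [hroot]
  have hXu : X * u = s := by rw [hX]; field_simp
  -- epsilon identity
  have hεq : q * fQ q α xh = (q-2)*u - q := by
    have := fQ_xh hα0 hq2
    rw [← hxh, ← hu] at this
    rw [this]; field_simp
  have huid : u * (p-1-p*X+X*y) = p * fQ q α xh := by
    have hexp : u * (p-1-p*X+X*y) = (p-1)*u - p + (s*y - p*(s-1)) - p*(X*u - s) + (X*u - s)*y := by ring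
    rw [hexp, hsy, hXu]
    have : p * fQ q α xh = (q * fQ q α xh)/2 := by rw [hp]; ring
    rw [this, hεq]; ring
  -- core inequality, multiplied by u
  have core := coreA p X hp32 hX0 hX1
  rw [hXy] at core
  have hmul := mul_lt_mul_of_pos_left core hu0
  rw [show u * (2*(p-1)*(p-1-p*X+X*y)) = 2*(p-1)*(u*(p-1-p*X+X*y)) by ring, huid] at hmul
  -- hmul : u * (p*(1-y)^2*X^(3/4)) < 2*(p-1)*(p*fQ xh)
  -- geometric identity : s * (xh/a)^(1/2) = u * X^(3/4)
  have ha32 : a^(2:ℕ) = a^((3:ℝ)/2) * a^((1:ℝ)/2) := by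
    rw [← Real.rpow_add ha0, ← Real.rpow_natCast a 2]; norm_num
  have hxh32 : xh^(2:ℕ) = xh^((3:ℝ)/2) * xh^((1:ℝ)/2) := by
    rw [← Real.rpow_add hxh0, ← Real.rpow_natCast xh 2]; norm_num
  have hs34 : s ^ ((3:ℝ)/4) = a^((3:ℝ)/2) := by
    rw [hs, ← Real.rpow_natCast a 2, ← Real.rpow_mul ha0.le]; norm_num
  have hu34 : u ^ ((3:ℝ)/4) = xh^((3:ℝ)/2) := by
    rw [hu, ← Real.rpow_natCast xh 2, ← Real.rpow_mul hxh0.le]; norm_num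
  have hgeo : s * (xh/a)^((1:ℝ)/2) = u * X^((3:ℝ)/4) := by
    rw [hX, Real.div_rpow hs0.le hu0.le, Real.div_rpow hxh0.le ha0.le, hs34, hu34]
    rw [hs, hu, ha32, hxh32]
    have h1 : (0:ℝ) < a^((1:ℝ)/2) := Real.rpow_pos_of_pos ha0 _
    have h2 : (0:ℝ) < xh^((3:ℝ)/2) := Real.rpow_pos_of_pos hxh0 _
    field_simp
  -- conclude
  rw [psiQ_root hα0 ha0 hfa, ← hs, ← hy, psiQ_xh hα0 hq2, ← hxh]
  calc 4*s*(1-y)^2 * (xh/a)^((1:ℝ)/2)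
      = 4*(1-y)^2 * (s * (xh/a)^((1:ℝ)/2)) := by ring
    _ = 4*(1-y)^2 * (u * X^((3:ℝ)/4)) := by rw [hgeo]
    _ < 4*(q-2)*fQ q α xh := by
        have h4 : (0:ℝ) < 4/p := by positivity
        have := mul_lt_mul_of_pos_left hmul h4
        rw [show 4/p * (u*(p*(1-y)^2*X^((3:ℝ)/4))) = (4*(1-y)^2*(u*X^((3:ℝ)/4))) * (p/p) by ring,
          show 4/p * (2*(p-1)*(p*fQ q α xh)) = (8*(p-1)*fQ q α xh) * (p/p) by ring,
          div_self hp0.ne', mul_one, mul_one] at this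
        rw [show 4*(q-2)*fQ q α xh = 8*(p-1)*fQ q α xh by rw [hp]; ring]
        exact this

end Key

section Key2
variable {q α : ℝ}

lemma keyB (hα0 : 0 < α) (hq3 : 3 ≤ q) (hq4 : q ≤ 4) (hαs : α < alphaStar q)
    {b : ℝ} (hxb : (2 / (α * q)) ^ ((1:ℝ) / (q - 2)) < b)
    (hfb : fQ q α b = 0) :
    psiQ q α ((2 / (α * q)) ^ ((1:ℝ) / (q - 2)))
        * (b/((2 / (α * q)) ^ ((1:ℝ) / (q - 2))))^((1:ℝ)/2)
      < psiQ q α b := by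
  have hq2 : 2 < q := by linarith
  set xh := (2 / (α * q)) ^ ((1:ℝ) / (q - 2)) with hxh
  have hxh0 : 0 < xh := xh_pos hα0 (by linarith)
  have hb0 : 0 < b := by linarith
  have hkey := xh_pow hα0 hq2
  rw [← hxh] at hkey
  set p := q/2 with hp
  have hp32 : (3:ℝ)/2 ≤ p := by rw [hp]; linarith
  have hp0 : 0 < p := by linarith
  set s := b^(2:ℕ) with hs
  set u := xh^(2:ℕ) with hu
  have hs0 : 0 < s := by positivity
  have hu0 : 0 < u := by positivity
  set y := α*q*b^(q-2)/2 with hy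
  set X := s/u with hX
  have hX0 : 0 < X := by positivity
  have hX1 : 1 < X := by
    rw [hX, lt_div_iff₀ hu0, hs, hu, one_mul]
    exact pow_lt_pow_left₀ hxb hxh0.le (by norm_num)
  have hXy : X ^ (p - 1) = y := by
    have e1 : X = (b/xh)^((2:ℕ):ℝ) := by
      rw [Real.rpow_natCast, hX, hs, hu, div_pow]
    have e2 : X ^ (p-1) = (b/xh) ^ (q-2) := by
      rw [e1, ← Real.rpow_mul (by positivity)]
      norm_num [hp]
      ring_nf
    rw [e2, Real.div_rpow hb0.le hxh0.le, hy]
    have hxhq : xh ^ (q-2) = 2/(α*q) := by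
      rw [eq_div_iff (by positivity : α*q ≠ 0)]; linarith
    rw [hxhq]
    field_simp
  have haq : b^q = b^(q-2) * s := by
    rw [hs, ← Real.rpow_natCast b 2, ← Real.rpow_add hb0]
    norm_num
  have hroot : α * b^q = s - 1 := by
    have := hfb; unfold fQ at this
    rw [← hs] at this; linarith
  have hsy : s * y = p * (s - 1) := by
    rw [hy, hp]
    rw [haq] at hroot
    field_simp
    nlinarith [hroot]
  have hXu : X * u = s := by rw [hX]; field_simp
  have hεq : q * fQ q α xh = (q-2)*u - q := by
    have := fQ_xh hα0 hq2
    rw [← hxh, ← hu] at this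
    rw [this]; field_simp
  have huid : u * (p-1-p*X+X*y) = p * fQ q α xh := by
    have hexp : u * (p-1-p*X+X*y) = (p-1)*u - p + (s*y - p*(s-1)) - p*(X*u - s) + (X*u - s)*y := by ring
    rw [hexp, hsy, hXu]
    have : p * fQ q α xh = (q * fQ q α xh)/2 := by rw [hp]; ring
    rw [this, hεq]; ring
  have core := coreB p X hp32 hX1
  rw [hXy] at core
  have hmul := mul_lt_mul_of_pos_left core hu0
  rw [show u * (2*(p-1)*(p-1-p*X+X*y)) = 2*(p-1)*(u*(p-1-p*X+X*y)) by ring, huid] at hmul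
  -- hmul : 2*(p-1)*(p * fQ xh) < u * (p*(1-y)^2*X^(3/4))
  have hb32 : b^(2:ℕ) = b^((3:ℝ)/2) * b^((1:ℝ)/2) := by
    rw [← Real.rpow_add hb0, ← Real.rpow_natCast b 2]; norm_num
  have hxh32 : xh^(2:ℕ) = xh^((3:ℝ)/2) * xh^((1:ℝ)/2) := by
    rw [← Real.rpow_add hxh0, ← Real.rpow_natCast xh 2]; norm_num
  have hs34 : s ^ ((3:ℝ)/4) = b^((3:ℝ)/2) := by
    rw [hs, ← Real.rpow_natCast b 2, ← Real.rpow_mul hb0.le]; norm_num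
  have hu34 : u ^ ((3:ℝ)/4) = xh^((3:ℝ)/2) := by
    rw [hu, ← Real.rpow_natCast xh 2, ← Real.rpow_mul hxh0.le]; norm_num
  have hgeo : u * X^((3:ℝ)/4) * (b/xh)^((1:ℝ)/2) = s := by
    rw [hX, Real.div_rpow hs0.le hu0.le, Real.div_rpow hb0.le hxh0.le, hs34, hu34]
    rw [hs, hu, hb32, hxh32]
    have h1 : (0:ℝ) < xh^((1:ℝ)/2) := Real.rpow_pos_of_pos hxh0 _
    have h2 : (0:ℝ) < xh^((3:ℝ)/2) := Real.rpow_pos_of_pos hxh0 _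
    field_simp
  have hW0 : (0:ℝ) < (b/xh)^((1:ℝ)/2) := Real.rpow_pos_of_pos (by positivity) _
  rw [psiQ_root hα0 hb0 hfb, ← hs, ← hy, psiQ_xh hα0 hq2, ← hxh]
  have hmul2 : 2*(p-1)*fQ q α xh < u*((1-y)^2*X^((3:ℝ)/4)) := by
    rw [show 2*(p-1)*(p*fQ q α xh) = p*(2*(p-1)*fQ q α xh) by ring,
      show u*(p*(1-y)^2*X^((3:ℝ)/4)) = p*(u*((1-y)^2*X^((3:ℝ)/4))) by ring] at hmul
    exact lt_of_mul_lt_mul_left hmul hp0.le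
  rw [show (4:ℝ)*(q-2) = 8*(p-1) by rw [hp]; ring]
  calc 8*(p-1)*fQ q α xh * (b/xh)^((1:ℝ)/2)
      = 4*(b/xh)^((1:ℝ)/2) * (2*(p-1)*fQ q α xh) := by ring
    _ < 4*(b/xh)^((1:ℝ)/2) * (u*((1-y)^2*X^((3:ℝ)/4))) := by
        exact mul_lt_mul_of_pos_left hmul2 (by positivity)
    _ = 4*(1-y)^2 * (u * X^((3:ℝ)/4) * (b/xh)^((1:ℝ)/2)) := by ring
    _ = 4*s*(1-y)^2 := by rw [hgeo]; ring
end Key2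


/-- for 3 ≤ q ≤ 4 and α ∈ (0, α*(q)), g(x₀) < g(x̂) < g(x₁),
where g = ψ²/t^{q-3} and x̂ is the unique positive zero of f'. -/
theorem stmt_11 (q α : ℝ) (hq3 : 3 ≤ q) (hq4 : q ≤ 4) (hα : α ∈ Ioo (0 : ℝ) (alphaStar q)) :
    let g : ℝ → ℝ := fun t => psiQ q α t ^ 2 / t ^ (q - 3)
    let xhat : ℝ := (2 / (α * q)) ^ (1 / (q - 2))
    g (x0 q α) < g xhat ∧ g xhat < g (x1 q α) := by
  obtain ⟨hα0, hαs⟩ := hα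
  intro g xhat
  have hq2 : 2 < q := by linarith
  obtain ⟨a, b, ha1, hax, hxb, hfa, hfb⟩ := exists_roots hα0 hq2 hq3 hαs
  have hset := root_set_eq hα0 hq2 hq3 hαs ha1 hax hxb hfa hfb
  have hab : a ≤ b := by linarith [lt_trans hax hxb]
  have hx0 : x0 q α = a := by
    simp only [x0]; rw [hset, csInf_pair]; exact inf_eq_left.2 hab
  have hx1 : x1 q α = b := by
    simp only [x1]; rw [hset, csSup_pair]; exact sup_eq_right.2 hab
  rw [hx0, hx1]
  have hxh0 : (0:ℝ) < (2 / (α * q)) ^ ((1:ℝ) / (q - 2)) := xh_pos hα0 (by linarith)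
  have ha0 : 0 < a := by linarith
  have hA0 : 0 ≤ psiQ q α a := by
    rw [psiQ_root hα0 ha0 hfa]; positivity
  have hB0 : 0 ≤ psiQ q α ((2 / (α * q)) ^ ((1:ℝ) / (q - 2))) := by
    rw [psiQ_xh hα0 hq2]
    have := fQ_xh_pos hα0 hq2 hαs
    nlinarith
  constructor
  · exact final_step q (psiQ q α a) (psiQ q α ((2 / (α * q)) ^ ((1:ℝ) / (q - 2))))
      a ((2 / (α * q)) ^ ((1:ℝ) / (q - 2))) hq3 hq4 ha0 hax.le hA0
      (keyA hα0 hq3 hq4 hαs ha1 hax hfa)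
  · exact final_step q (psiQ q α ((2 / (α * q)) ^ ((1:ℝ) / (q - 2)))) (psiQ q α b)
      ((2 / (α * q)) ^ ((1:ℝ) / (q - 2))) b hq3 hq4 hxh0 hxb.le hB0
      (keyB hα0 hq3 hq4 hαs hxb hfb)
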